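/- Let n > 0 be a real number. Suppose α : [0,∞) → ℝ is continuous, differentiable on (0,∞), satisfies α(0) = 1, and satisfies the Riccati equation r α'(r) = n (r²/n² + α(r) − α(r)²) for all r > 0. Then for all r > 0: 1 ≤ α(r) ≤ 1/2 + √(1/4 + r²/n²) and α'(r) ≥ 0. -/
import Mathlib


open Set

/-- Riccati estimate for the Bessel ratio `𝒜(r) = α_{n−2}(r)/α_n(r)`:
a continuous solution on `[0,∞)` of `rα' = n(r²/n² + α − α²)` with `α(0) = 1` satisfies
`1 ≤ α(r) ≤ 1/2 + √(1/4 + r²/n²)` and `α' ≥ 0` on `(0,∞)`. -/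
theorem riccati_alpha (n : ℝ) (hn : 0 < n) (α : ℝ → ℝ)
    (hcont : ContinuousOn α (Ici 0))
    (hdiff : ∀ r : ℝ, 0 < r → DifferentiableAt ℝ α r)
    (h0 : α 0 = 1)
    (hriccati : ∀ r : ℝ, 0 < r →
      r * deriv α r = n * (r ^ 2 / n ^ 2 + α r - α r ^ 2)) :
    ∀ r : ℝ, 0 < r →
      1 ≤ α r ∧ α r ≤ 1 / 2 + Real.sqrt (1 / 4 + r ^ 2 / n ^ 2) ∧ 0 ≤ deriv α r := by
  -- derivative formula
  have hderiv : ∀ r : ℝ, 0 < r →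
      deriv α r = n * (r ^ 2 / n ^ 2 + α r - α r ^ 2) / r := by
    intro r hr
    rw [eq_div_iff hr.ne']
    linarith [hriccati r hr]
  -- Lower bound
  have hlow : ∀ r : ℝ, 0 < r → 1 ≤ α r := by
    intro r₀ hr₀
    by_contra h
    push_neg at h
    set S : Set ℝ := Icc 0 r₀ ∩ α ⁻¹' Ici 1 with hSdef
    have hS0 : (0 : ℝ) ∈ S := ⟨⟨le_refl 0, hr₀.le⟩, by simp [h0]⟩
    have hSclosed : IsClosed S :=
      (hcont.mono Icc_subset_Ici_self).preimage_isClosed_of_isClosed isClosed_Icc isClosed_Ici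
    have hSbdd : BddAbove S := ⟨r₀, fun x hx => hx.1.2⟩
    obtain ⟨s, hsS, hsmax⟩ : ∃ s, s ∈ S ∧ ∀ x ∈ S, x ≤ s :=
      ⟨sSup S, hSclosed.csSup_mem ⟨0, hS0⟩ hSbdd, fun x hx => le_csSup hSbdd hx⟩
    have hs0 : 0 ≤ s := hsS.1.1
    have hsr₀ : s ≤ r₀ := hsS.1.2
    have hαs : 1 ≤ α s := hsS.2
    have hslt : s < r₀ := lt_of_le_of_ne hsr₀ (by rintro rfl; linarith)
    have hlt1 : ∀ r, r ∈ Ioc s r₀ → α r < 1 := by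
      intro r hr
      by_contra hge
      push_neg at hge
      exact absurd (hsmax r ⟨⟨le_trans hs0 hr.1.le, hr.2⟩, hge⟩) (not_le.mpr hr.1)
    -- continuity gives positivity near s
    have htend : Filter.Tendsto α (nhdsWithin s (Ici 0)) (nhds (α s)) := hcont s hs0
    have hev : ∀ᶠ x in nhdsWithin s (Ici 0), 0 < α x :=
      htend.eventually (eventually_gt_nhds (by linarith : (0:ℝ) < α s))
    obtain ⟨δ, hδ, hball⟩ := Metric.mem_nhdsWithin_iff.mp hev
    set t := min (s + δ / 2) r₀ with htdef
    have hst : s < t := lt_min (by linarith) hslt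
    have htr₀ : t ≤ r₀ := min_le_right _ _
    have hmono : StrictMonoOn α (Icc s t) := by
      apply strictMonoOn_of_deriv_pos (convex_Icc s t)
      · exact hcont.mono (fun x hx => le_trans hs0 hx.1)
      · intro x hx
        rw [interior_Icc] at hx
        have hx0 : 0 < x := lt_of_le_of_lt hs0 hx.1
        have hx1 : α x < 1 := hlt1 x ⟨hx.1, le_trans hx.2.le htr₀⟩
        have hxpos : 0 < α x := by
          apply hball
          constructor
          · rw [Metric.mem_ball, Real.dist_eq,
              abs_of_nonneg (by linarith [hx.1.le] : (0:ℝ) ≤ x - s)]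
            have : x < s + δ / 2 := lt_of_lt_of_le hx.2 (min_le_left _ _)
            linarith
          · exact hx0.le
        rw [hderiv x hx0]
        have hn2 : 0 < n ^ 2 := by positivity
        have h1 : 0 < x ^ 2 / n ^ 2 := by positivity
        have h2 : 0 < α x - α x ^ 2 := by nlinarith
        exact div_pos (mul_pos hn (by linarith)) hx0
    have hlt : α s < α t := hmono (left_mem_Icc.mpr hst.le) (right_mem_Icc.mpr hst.le) hst
    have := hlt1 t ⟨hst, htr₀⟩
    linarith
  -- Upper bound
  have hupper : ∀ r : ℝ, 0 < r → α r ≤ 1 / 2 + Real.sqrt (1 / 4 + r ^ 2 / n ^ 2) := by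
    intro r₀ hr₀
    by_contra h
    push_neg at h
    set β : ℝ → ℝ := fun r => 1 / 2 + Real.sqrt (1 / 4 + r ^ 2 / n ^ 2) with hβdef
    have hn2 : 0 < n ^ 2 := by positivity
    have hβcont : Continuous β := by
      apply Continuous.add continuous_const
      apply Real.continuous_sqrt.comp
      continuity
    have hβmono : ∀ a b : ℝ, 0 ≤ a → a ≤ b → β a ≤ β b := by
      intro a b ha hab
      have h2 : a ^ 2 ≤ b ^ 2 := by nlinarith
      have h3 : 1/4 + a^2/n^2 ≤ 1/4 + b^2/n^2 := by
        have := (div_le_div_iff_of_pos_right hn2).mpr h2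
        linarith
      have := Real.sqrt_le_sqrt h3
      simp only [hβdef]
      linarith
    have hβ0 : β 0 = 1 := by
      have h1 : (1:ℝ)/4 + 0^2/n^2 = (1/2)^2 := by
        rw [zero_pow (by norm_num), zero_div]; norm_num
      simp only [hβdef, h1, Real.sqrt_sq (by norm_num : (0:ℝ) ≤ 1/2)]
      norm_num
    set S : Set ℝ := Icc 0 r₀ ∩ (fun r => α r - β r) ⁻¹' Iic 0 with hSdef
    have hS0 : (0 : ℝ) ∈ S := ⟨⟨le_refl 0, hr₀.le⟩, by simp [h0, hβ0]⟩
    have hSclosed : IsClosed S :=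
      ((hcont.mono Icc_subset_Ici_self).sub hβcont.continuousOn).preimage_isClosed_of_isClosed
        isClosed_Icc isClosed_Iic
    have hSbdd : BddAbove S := ⟨r₀, fun x hx => hx.1.2⟩
    obtain ⟨s, hsS, hsmax⟩ : ∃ s, s ∈ S ∧ ∀ x ∈ S, x ≤ s :=
      ⟨sSup S, hSclosed.csSup_mem ⟨0, hS0⟩ hSbdd, fun x hx => le_csSup hSbdd hx⟩
    have hs0 : 0 ≤ s := hsS.1.1
    have hsr₀ : s ≤ r₀ := hsS.1.2
    have hαs : α s ≤ β s := by have := hsS.2; simpa [sub_nonpos] using this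
    have hslt : s < r₀ := by
      refine lt_of_le_of_ne hsr₀ ?_
      rintro rfl
      exact absurd hαs (not_le.mpr h)
    have hgt : ∀ r, r ∈ Ioc s r₀ → β r < α r := by
      intro r hr
      by_contra hge
      push_neg at hge
      have : r ∈ S := ⟨⟨le_trans hs0 hr.1.le, hr.2⟩, by simp [sub_nonpos, hge]⟩
      exact absurd (hsmax r this) (not_le.mpr hr.1)
    have hanti : StrictAntiOn α (Icc s r₀) := by
      apply strictAntiOn_of_deriv_neg (convex_Icc s r₀)
      · exact hcont.mono (fun x hx => le_trans hs0 hx.1)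
      · intro x hx
        rw [interior_Icc] at hx
        have hx0 : 0 < x := lt_of_le_of_lt hs0 hx.1
        have hβx : β x < α x := hgt x ⟨hx.1, hx.2.le⟩
        have hq0 : 0 ≤ Real.sqrt (1 / 4 + x ^ 2 / n ^ 2) := Real.sqrt_nonneg _
        have hq2 : Real.sqrt (1 / 4 + x ^ 2 / n ^ 2) ^ 2 = 1 / 4 + x ^ 2 / n ^ 2 :=
          Real.sq_sqrt (by positivity)
        have hβxval : β x = 1 / 2 + Real.sqrt (1 / 4 + x ^ 2 / n ^ 2) := rfl
        rw [hderiv x hx0]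
        apply div_neg_of_neg_of_pos _ hx0
        rw [hβxval] at hβx
        have hkey : x ^ 2 / n ^ 2 + α x - α x ^ 2 < 0 := by nlinarith
        nlinarith
    have h1 : α r₀ < α s := hanti (left_mem_Icc.mpr hsr₀) (right_mem_Icc.mpr hsr₀) hslt
    have h2 : β s ≤ β r₀ := hβmono s r₀ hs0 hsr₀
    have hβr₀ : β r₀ = 1 / 2 + Real.sqrt (1 / 4 + r₀ ^ 2 / n ^ 2) := rfl
    rw [hβr₀] at h2
    have h3 : α r₀ < 1 / 2 + Real.sqrt (1 / 4 + r₀ ^ 2 / n ^ 2) :=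
      lt_of_lt_of_le (lt_of_lt_of_le h1 hαs) h2
    exact absurd h (not_lt.mpr h3.le)
  -- conclusion
  intro r hr
  refine ⟨hlow r hr, hupper r hr, ?_⟩
  have h1 := hlow r hr
  have h2 := hupper r hr
  have hq0 : 0 ≤ Real.sqrt (1 / 4 + r ^ 2 / n ^ 2) := Real.sqrt_nonneg _
  have hq2 : Real.sqrt (1 / 4 + r ^ 2 / n ^ 2) ^ 2 = 1 / 4 + r ^ 2 / n ^ 2 :=
    Real.sq_sqrt (by positivity)
  rw [hderiv r hr]
  apply div_nonneg _ hr.le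
  have : 0 ≤ r ^ 2 / n ^ 2 + α r - α r ^ 2 := by nlinarith
  positivity
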